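/- Let p > 3 be prime and write r = 2 + n(p-1)p^t with t ≥ 0 and n ≥ 0. Then Σ_{1<j≤r-1, j≡1 mod (p-1)} C(r,j) ≡ 2 - r + 2n·p^{t+1} (mod p^{t+2}). -/

import Mathlib

open Finset

lemma L3 {p : ℕ} (hp : p.Prime) (hp3 : 3 ≤ p) (s : ℕ) (hs : 1 ≤ s) (e : ℤ) :
    (1 + (p:ℤ)^s * e)^p ≡ 1 + (p:ℤ)^(s+1) * e [ZMOD (p:ℤ)^(s+2)] := by
  obtain ⟨m, rfl⟩ : ∃ m, p = m + 3 := ⟨p - 3, by omega⟩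
  set x : ℤ := ((m+3:ℕ):ℤ)^s * e with hx
  have hexp : (x + 1) ^ (m+3) = ∑ i ∈ range (m+3+1), x ^ i * 1 ^ (m+3-i) * ((m+3).choose i : ℤ) :=
    add_pow x 1 (m+3)
  have hsplit : (∑ i ∈ range (m+3+1), x ^ i * 1 ^ (m+3-i) * ((m+3).choose i : ℤ))
      = (∑ i ∈ range (m+2), x ^ (i+2) * 1 ^ (m+3-(i+2)) * ((m+3).choose (i+2) : ℤ))
        + x ^ 1 * 1 ^ (m+3-1) * ((m+3).choose 1 : ℤ)
        + x ^ 0 * 1 ^ (m+3) * ((m+3).choose 0 : ℤ) := by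
    rw [sum_range_succ' _ (m+3), sum_range_succ' (fun i => x ^ (i+1) * 1^(m+3-(i+1)) * ((m+3).choose (i+1):ℤ)) (m+2)]
    simp [Nat.choose_zero_right]
  have hdvd : ((m+3:ℕ):ℤ)^(s+2) ∣ ∑ i ∈ range (m+2), x ^ (i+2) * 1 ^ (m+3-(i+2)) * ((m+3).choose (i+2) : ℤ) := by
    apply Finset.dvd_sum
    intro i hi
    simp only [one_pow, mul_one]
    rcases eq_or_lt_of_le (by simp at hi; omega : i + 2 ≤ m + 3) with h | h
    · have : x ^ (i+2) * ((m+3).choose (i+2) : ℤ) = x^(m+3) := by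
        rw [h, Nat.choose_self]; push_cast; ring
      rw [this, hx, mul_pow, ← pow_mul]
      have h2 : s + 2 ≤ s * (m+3) := by nlinarith
      exact Dvd.dvd.mul_right (pow_dvd_pow _ h2) _
    · have hc : ((m+3:ℕ):ℤ) ∣ ((m+3).choose (i+2) : ℤ) := by
        exact_mod_cast Int.natCast_dvd_natCast.mpr (hp.dvd_choose_self (by omega) h)
      have hx2 : ((m+3:ℕ):ℤ)^(s*2) ∣ x ^ (i+2) := by
        rw [hx, mul_pow, ← pow_mul]
        exact Dvd.dvd.mul_right (pow_dvd_pow _ (by nlinarith)) _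
      have : ((m+3:ℕ):ℤ)^(s*2+1) ∣ x ^ (i+2) * ((m+3).choose (i+2) : ℤ) := by
        rw [pow_succ]
        exact mul_dvd_mul hx2 hc
      exact dvd_trans (pow_dvd_pow _ (by omega)) this
  have key : (x + 1) ^ (m+3) - (1 + ((m+3:ℕ):ℤ)^(s+1) * e)
      = (∑ i ∈ range (m+2), x ^ (i+2) * 1 ^ (m+3-(i+2)) * ((m+3).choose (i+2) : ℤ)) := by
    rw [hexp, hsplit]
    rw [Nat.choose_one_right, Nat.choose_zero_right, hx]
    push_cast
    ring
  have hd2 : ((m+3:ℕ):ℤ)^(s+2) ∣ (x+1)^(m+3) - (1 + ((m+3:ℕ):ℤ)^(s+1)*e) := key ▸ hdvd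
  have := (Int.ModEq.symm (Int.modEq_iff_dvd.mpr hd2))
  rwa [add_comm x 1] at this

lemma L2 {p : ℕ} (hp : p.Prime) (hp3 : 3 ≤ p) (c : ℤ) :
    ∀ t : ℕ, (1 + (p:ℤ) * c)^(p^t) ≡ 1 + (p:ℤ)^(t+1) * c [ZMOD (p:ℤ)^(t+2)] := by
  intro t
  induction t with
  | zero => simp
  | succ t ih =>
    obtain ⟨e, he⟩ : ∃ e, (1 + (p:ℤ)*c)^(p^t) = 1 + (p:ℤ)^(t+1)*(c + p*e) := by
      obtain ⟨e, he⟩ := (Int.modEq_iff_dvd.mp ih)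
      exact ⟨-e, by linear_combination -he⟩
    have h1 : (1 + (p:ℤ)*c)^(p^(t+1)) = (1 + (p:ℤ)^(t+1)*(c + p*e))^p := by
      rw [← he, ← pow_mul, pow_succ]
    have h2 := L3 hp hp3 (t+1) (by omega) (c + p*e)
    rw [h1]
    have h3 : (1 + (p:ℤ)^(t+2)*(c + p*e)) ≡ 1 + (p:ℤ)^(t+2)*c [ZMOD (p:ℤ)^(t+3)] := by
      have : (p:ℤ)^(t+3) ∣ (1 + (p:ℤ)^(t+2)*c) - (1 + (p:ℤ)^(t+2)*(c + p*e)) := ⟨-e, by ring⟩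
      exact (Int.modEq_iff_dvd.mpr this)
    calc (1 + (p:ℤ)^(t+1)*(c + p*e))^p
        ≡ 1 + (p:ℤ)^(t+2)*(c + p*e) [ZMOD (p:ℤ)^(t+3)] := h2
      _ ≡ 1 + (p:ℤ)^(t+2)*c [ZMOD (p:ℤ)^(t+3)] := h3

lemma L4 {R : Type*} [CommRing R] {x : R} (hx : x^2 = 0) (n : ℕ) :
    (1 + x)^n = 1 + (n:R) * x := by
  induction n with
  | zero => simp
  | succ n ih =>
    rw [pow_succ, ih]
    push_cast
    linear_combination (n:R) * hx

lemma F2 {R : Type*} [CommRing R] {z : R} {N : ℕ} (hz : z^N = 1) (hu : IsUnit (z - 1)) :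
    ∑ k ∈ range N, z^k = 0 := by
  have h := geom_sum_mul z N
  rw [hz, sub_self] at h
  obtain ⟨v, hv⟩ := hu
  have := congrArg (fun w => w * ((v⁻¹ : Rˣ) : R)) h
  simpa [mul_assoc, ← hv] using this

-- main filter/swap lemma
lemma Gswap {R : Type*} [CommRing R] (d : ℕ) (ω : R) (hω : ω^(d+1) = 1)
    (hu : ∀ m : ℕ, ¬ (d+1) ∣ m → IsUnit (ω^m - 1)) (m : ℕ) :
    ∑ k ∈ range (d+1), ω^(d*k) * (1+ω^k)^m
      = (d+1 : R) * ∑ j ∈ (range (m+1)).filter (fun j => (d+1) ∣ (j+d)), (m.choose j : R) := by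
  have hexp : ∀ k, ω^(d*k) * (1+ω^k)^m
      = ∑ j ∈ range (m+1), (m.choose j : R) * ω^(k*(j+d)) := by
    intro k
    rw [add_comm (1:R) (ω^k), add_pow]
    rw [Finset.mul_sum]
    apply Finset.sum_congr rfl
    intro j _
    rw [one_pow, mul_one, ← pow_mul, ← mul_assoc, ← pow_add]
    rw [show d*k + k*j = k*(j+d) by ring]
    ring
  calc ∑ k ∈ range (d+1), ω^(d*k) * (1+ω^k)^m
      = ∑ k ∈ range (d+1), ∑ j ∈ range (m+1), (m.choose j : R) * ω^(k*(j+d)) := by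
        exact Finset.sum_congr rfl (fun k _ => hexp k)
    _ = ∑ j ∈ range (m+1), ∑ k ∈ range (d+1), (m.choose j : R) * ω^(k*(j+d)) := Finset.sum_comm
    _ = ∑ j ∈ range (m+1), (m.choose j : R) * ∑ k ∈ range (d+1), (ω^(j+d))^k := by
        apply Finset.sum_congr rfl
        intro j _
        rw [Finset.mul_sum]
        apply Finset.sum_congr rfl
        intro k _
        rw [← pow_mul, mul_comm (j+d) k]
    _ = ∑ j ∈ range (m+1), (m.choose j : R) * (if (d+1) ∣ (j+d) then (d+1:R) else 0) := by
        apply Finset.sum_congr rfl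
        intro j _
        congr 1
        by_cases h : (d+1) ∣ (j+d)
        · rw [if_pos h]
          obtain ⟨q, hq⟩ := h
          have : (ω^(j+d)) = 1 := by rw [hq, pow_mul, hω, one_pow]
          rw [this]
          simp
        · rw [if_neg h]
          have h1 : (ω^(j+d))^(d+1) = 1 := by rw [← pow_mul, mul_comm, pow_mul, hω, one_pow]
          exact F2 h1 (hu _ h)
    _ = (d+1 : R) * ∑ j ∈ (range (m+1)).filter (fun j => (d+1) ∣ (j+d)), (m.choose j : R) := by
        rw [Finset.mul_sum, Finset.sum_filter]
        apply Finset.sum_congr rfl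
        intro j _
        split_ifs <;> ring

lemma Ured {p q : ℕ} (hp : p.Prime) (hq : 1 ≤ q) (x : ZMod (p^q))
    (h : ZMod.castHom (dvd_pow_self p (by omega : q ≠ 0)) (ZMod p) x ≠ 0) : IsUnit x := by
  haveI : Fact p.Prime := ⟨hp⟩
  haveI : NeZero (p^q) := ⟨pow_ne_zero _ hp.pos.ne'⟩
  have hx : ((x.val : ℕ) : ZMod (p^q)) = x := ZMod.natCast_rightInverse x
  have h2 : ((x.val : ℕ) : ZMod p) ≠ 0 := by
    rw [← hx] at h
    rwa [map_natCast] at h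
  have h3 : ¬ p ∣ x.val := fun hd => h2 ((ZMod.natCast_eq_zero_iff _ _).mpr hd)
  rw [← hx]
  exact (ZMod.isUnit_iff_coprime _ _).mpr
    (Nat.Coprime.pow_right q (Nat.coprime_comm.mp ((hp.coprime_iff_not_dvd).mpr h3)))

lemma Wexists {p : ℕ} (hp : p.Prime) (hp3 : 3 < p) (q : ℕ) (hq : 1 ≤ q) :
    ∃ ω : ZMod (p^q), ω^(p-1) = 1 ∧ (∀ m : ℕ, ¬ (p-1) ∣ m → IsUnit (ω^m - 1)) ∧
      (∀ k : ℕ, IsUnit (1 + ω^k) ∨ 1 + ω^k = 0) := by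
  haveI : Fact p.Prime := ⟨hp⟩
  haveI : NeZero (p^q) := ⟨pow_ne_zero _ hp.pos.ne'⟩
  have hodd : p % 2 = 1 := Nat.odd_iff.mp (hp.odd_of_ne_two (by omega))
  set π := ZMod.castHom (dvd_pow_self p (by omega : q ≠ 0)) (ZMod p) with hπ
  obtain ⟨g, hg⟩ := IsCyclic.exists_generator (α := (ZMod p)ˣ)
  have horder : orderOf g = p - 1 := by
    rw [orderOf_eq_card_of_forall_mem_zpowers hg, Nat.card_eq_fintype_card, ZMod.card_units]
  have horder' : orderOf ((g : ZMod p)) = p - 1 := by rw [orderOf_units]; exact horder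
  have hgp : ((g : ZMod p))^(p-1) = 1 := by rw [← horder']; exact pow_orderOf_eq_one _
  set a : ℕ := ((g : ZMod p)).val with haa
  have ha : ((a : ℕ) : ZMod p) = (g : ZMod p) := ZMod.natCast_rightInverse _
  have hpa : ¬ p ∣ a := by
    intro hdvd
    have h0 : ((a:ℕ) : ZMod p) = 0 := (ZMod.natCast_eq_zero_iff _ _).mpr hdvd
    rw [ha] at h0
    exact g.ne_zero h0
  have hunit : IsUnit ((a : ℕ) : ZMod (p^q)) := (ZMod.isUnit_iff_coprime _ _).mpr
    (Nat.Coprime.pow_right q (Nat.coprime_comm.mp ((hp.coprime_iff_not_dvd).mpr hpa)))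
  obtain ⟨U, hU⟩ := hunit
  set ω : ZMod (p^q) := ((U ^ (p^(q-1)) : (ZMod (p^q))ˣ) : ZMod (p^q)) with hωdef
  have hωeq : ω = ((U : ZMod (p^q)))^(p^(q-1)) := by rw [hωdef, Units.val_pow_eq_pow_val]
  have hEuler : ω^(p-1) = 1 := by
    rw [hωeq, ← pow_mul]
    have ht : p^(q-1)*(p-1) = (p^q).totient := by
      rw [Nat.totient_prime_pow hp (by omega)]
    rw [ht, ← Units.val_pow_eq_pow_val, ZMod.pow_totient U, Units.val_one]
  obtain ⟨s, hs⟩ : ∃ s, p^(q-1) = (p-1)*s + 1 := by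
    have hd := Nat.sub_dvd_pow_sub_pow p 1 (q-1)
    rw [one_pow] at hd
    obtain ⟨s, hs⟩ := hd
    have h1 : 1 ≤ p^(q-1) := Nat.one_le_pow _ _ hp.pos
    exact ⟨s, by omega⟩
  have hπω : π ω = (g : ZMod p) := by
    rw [hωeq, map_pow]
    have hπU : π (U : ZMod (p^q)) = (g:ZMod p) := by rw [hU, map_natCast, ha]
    rw [hπU, hs, pow_add, pow_mul, hgp, one_pow, pow_one, one_mul]
  have hUnits : ∀ m : ℕ, ¬ (p-1) ∣ m → IsUnit (ω^m - 1) := by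
    intro m hm
    apply Ured hp hq
    rw [map_sub, map_pow, map_one]
    rw [show ZMod.castHom (dvd_pow_self p (by omega : q ≠ 0)) (ZMod p) ω = π ω from rfl, hπω]
    apply sub_ne_zero.mpr
    intro h0
    have hdvd := orderOf_dvd_of_pow_eq_one h0
    rw [horder'] at hdvd
    exact hm hdvd
  refine ⟨ω, hEuler, hUnits, ?_⟩
  intro k
  by_cases hne : π (1 + ω^k) ≠ 0
  · left
    exact Ured hp hq _ hne
  · right
    push_neg at hne
    have hgk : (g:ZMod p)^k = -1 := by
      have hπ1 : π (1 + ω^k) = 1 + (g:ZMod p)^k := by rw [map_add, map_one, map_pow, hπω]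
      rw [hπ1] at hne
      linear_combination hne
    have h2k : (p-1) ∣ 2*k := by
      have hh : (g:ZMod p)^(2*k) = 1 := by rw [mul_comm, pow_mul, hgk, neg_one_sq]
      have := orderOf_dvd_of_pow_eq_one hh
      rwa [horder'] at this
    have hω2k : ω^(2*k) = 1 := by
      obtain ⟨m, hm⟩ := h2k
      rw [hm, pow_mul, hEuler, one_pow]
    have hx2 : (ω^k)^2 = 1 := by rw [← pow_mul, mul_comm]; exact hω2k
    have hxu : IsUnit (ω^k - 1) := by
      apply Ured hp hq
      rw [show ZMod.castHom (dvd_pow_self p (by omega : q ≠ 0)) (ZMod p) (ω^k - 1) = π (ω^k - 1) from rfl]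
      rw [map_sub, map_one, map_pow, hπω, hgk]
      intro h0
      have h2' : ((2:ℕ) : ZMod p) = 0 := by push_cast; linear_combination -h0
      rw [ZMod.natCast_eq_zero_iff] at h2'
      have := Nat.le_of_dvd (by omega) h2'
      omega
    obtain ⟨v, hv⟩ := hxu
    have hz : (ω^k - 1) * (ω^k + 1) = 0 := by linear_combination hx2
    have hfin : ω^k + 1 = 0 := by
      calc ω^k + 1 = ((v⁻¹:(ZMod (p^q))ˣ):ZMod (p^q)) * ((ω^k - 1) * (ω^k + 1)) := by
            rw [← mul_assoc, ← hv]
            simp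
        _ = 0 := by rw [hz, mul_zero]
    linear_combination hfin

-- kill lemma: p*z = 0 → p^(q-1)*z = 0 in ZMod (p^q), q ≥ 2
lemma Kill {p q : ℕ} (hp : p.Prime) (hq : 2 ≤ q) (z : ZMod (p^q))
    (h : (p : ZMod (p^q)) * z = 0) : (p : ZMod (p^q))^(q-1) * z = 0 := by
  haveI : NeZero (p^q) := ⟨pow_ne_zero _ hp.pos.ne'⟩
  have hz : ((z.val : ℕ) : ZMod (p^q)) = z := ZMod.natCast_rightInverse z
  have h1 : ((p * z.val : ℕ) : ZMod (p^q)) = 0 := by push_cast; rw [hz]; exact h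
  rw [ZMod.natCast_eq_zero_iff] at h1
  have h2 : p^(q-1) ∣ z.val := by
    have hq' : p^q = p * p^(q-1) := by
      rw [← pow_succ']
      congr 1
      omega
    have h1' : p * p^(q-1) ∣ p * z.val := by rw [← hq']; exact h1
    exact (Nat.mul_dvd_mul_iff_left hp.pos).mp h1'
  obtain ⟨w, hw⟩ := h2
  have : ((p^(q-1) * z.val : ℕ) : ZMod (p^q)) = 0 := by
    rw [ZMod.natCast_eq_zero_iff, hw, ← mul_assoc]
    exact Dvd.dvd.mul_right (by
      rw [← pow_add]
      exact pow_dvd_pow p (by omega)) w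
  calc (p : ZMod (p^q))^(q-1) * z = ((p^(q-1) * z.val : ℕ) : ZMod (p^q)) := by push_cast; rw [hz]
    _ = 0 := this

-- per-k coefficient lemma
lemma Ck {p t n r : ℕ} (hp : p.Prime) (hp3 : 3 < p) (hr : r = 2 + n*(p-1)*p^t)
    (y : ZMod (p^(t+2))) (hy : IsUnit y ∨ y = 0) :
    ∃ c : ZMod (p^(t+2)),
      y^r = y^2 + (n : ZMod (p^(t+2))) * (p : ZMod (p^(t+2)))^(t+1) * (y^2*c) ∧
      (p : ZMod (p^(t+2))) * (y^2*c) = y^(p+1) - y^2 := by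
  haveI : NeZero (p^(t+2)) := ⟨pow_ne_zero _ hp.pos.ne'⟩
  rcases hy with hy | hy
  · -- unit case
    set a : ℕ := y.val with ha
    have hay : ((a : ℕ) : ZMod (p^(t+2))) = y := ZMod.natCast_rightInverse y
    have hcop : Nat.Coprime a (p^(t+2)) := by
      rw [← hay] at hy
      exact (ZMod.isUnit_iff_coprime _ _).mp hy
    have hcopp : Nat.Coprime a p := Nat.Coprime.coprime_dvd_right (dvd_pow_self p (by omega)) hcop
    have hferm : a^(p-1) ≡ 1 [MOD p] := by
      have := Nat.ModEq.pow_totient hcopp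
      rwa [Nat.totient_prime hp] at this
    obtain ⟨c₀, hc₀⟩ : ∃ c₀ : ℤ, (a:ℤ)^(p-1) = 1 + (p:ℤ)*c₀ := by
      have hge : 1 ≤ a^(p-1) := Nat.one_le_iff_ne_zero.mpr (by
        intro h0
        rw [pow_eq_zero_iff (by omega : p - 1 ≠ 0)] at h0
        rw [h0] at hcopp
        simp [Nat.coprime_zero_left] at hcopp
        omega)
      have h1 : p ∣ a^(p-1) - 1 := (Nat.modEq_iff_dvd' hge).mp hferm.symm
      obtain ⟨c₀, hcc⟩ := h1
      refine ⟨(c₀ : ℤ), ?_⟩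
      have : (a:ℤ)^(p-1) - 1 = ((a^(p-1) - 1 : ℕ) : ℤ) := by
        push_cast [Nat.cast_sub hge]
        ring
      rw [hcc] at this
      push_cast at this
      linarith
    have hL2 := L2 hp (by omega) c₀ t
    have hcast : (((1 + (p:ℤ)*c₀)^(p^t) : ℤ) : ZMod (p^(t+2))) = ((1 + (p:ℤ)^(t+1)*c₀ : ℤ) : ZMod (p^(t+2))) := by
      rw [ZMod.intCast_eq_intCast_iff]
      exact_mod_cast hL2
    set c : ZMod (p^(t+2)) := ((c₀ : ℤ) : ZMod (p^(t+2))) with hc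
    have hykey : y^((p-1)*p^t) = 1 + (p : ZMod (p^(t+2)))^(t+1) * c := by
      rw [← hc₀] at hcast
      push_cast at hcast
      rw [hay, ← pow_mul] at hcast
      exact hcast
    have hyp1 : y^(p-1) = 1 + (p : ZMod (p^(t+2))) * c := by
      have := congrArg (fun z : ℤ => ((z : ℤ) : ZMod (p^(t+2)))) hc₀
      rw [← hay]
      push_cast at this ⊢
      exact this
    have hsq : ((p : ZMod (p^(t+2)))^(t+1) * c)^2 = 0 := by
      have h0 : ((p^(2*t+2) : ℕ) : ZMod (p^(t+2))) = 0 := by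
        rw [ZMod.natCast_eq_zero_iff]
        exact pow_dvd_pow p (by omega)
      calc ((p : ZMod (p^(t+2)))^(t+1) * c)^2 = ((p^(2*t+2) : ℕ) : ZMod (p^(t+2))) * c^2 := by
            push_cast; ring
        _ = 0 := by rw [h0, zero_mul]
    refine ⟨c, ?_, ?_⟩
    · have h5 : y^r = y^2 * (y^((p-1)*p^t))^n := by
        rw [← pow_mul, ← pow_add, hr]
        congr 1
        ring
      rw [h5, hykey, L4 hsq n]
      ring
    · have h6 : y^(p+1) = y^2 * y^(p-1) := by
        rw [← pow_add]
        congr 1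
        omega
      rw [h6, hyp1]
      ring
  · -- zero case
    have hr0 : r ≠ 0 := by simp [hr]
    refine ⟨0, ?_, ?_⟩ <;> rw [hy]
    · rw [zero_pow hr0]
      simp
    · simp [zero_pow (by omega : p + 1 ≠ 0)]
lemma Hmod (d j : ℕ) (hd : 3 ≤ d) : (d+1) ∣ (j+d) ↔ j % (d+1) = 1 % (d+1) := by
  have h1 : 1 % (d+1) = 1 := Nat.mod_eq_of_lt (by omega)
  rw [h1]
  constructor
  · rintro ⟨u, hu⟩
    match u with
    | 0 => omega
    | u+1 =>
      have hexp : (d+1)*(u+1) = (d+1)*u + d + 1 := by ring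
      have hj : j = (d+1)*u + 1 := by
        set w := (d+1)*u with hw
        omega
      rw [hj, Nat.mul_add_mod, h1]
  · intro h
    have h2 := Nat.div_add_mod j (d+1)
    refine ⟨j/(d+1) + 1, ?_⟩
    rw [Nat.mul_add, Nat.mul_one]
    set w := (d+1) * (j / (d+1)) with hw
    omega

lemma Hf2 (d : ℕ) (hd : 3 ≤ d) :
    (Finset.range (2+1)).filter (fun j => (d+1) ∣ (j+d)) = {1} := by
  ext j
  simp only [Finset.mem_filter, Finset.mem_range, Finset.mem_singleton]
  constructor
  · rintro ⟨hj, hdvd⟩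
    interval_cases j
    · exfalso
      have := Nat.le_of_dvd (by omega) hdvd
      omega
    · rfl
    · exfalso
      have h2 : (d+1) ∣ (2+d) - (d+1) := Nat.dvd_sub hdvd (dvd_refl _)
      have h3 : (2+d) - (d+1) = 1 := by omega
      rw [h3] at h2
      have := Nat.le_of_dvd one_pos h2
      omega
  · rintro rfl
    exact ⟨by omega, ⟨1, by omega⟩⟩

lemma Hf3 (d : ℕ) (hd : 3 ≤ d) :
    (Finset.range ((d+2)+1+1)).filter (fun j => (d+1) ∣ (j+d)) = {1, d+2} := by
  ext j
  simp only [Finset.mem_filter, Finset.mem_range, Finset.mem_insert, Finset.mem_singleton]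
  constructor
  · rintro ⟨hj, u, hu⟩
    match u with
    | 0 => omega
    | 1 => left; omega
    | 2 => right; omega
    | u+3 =>
      exfalso
      have hexp : (d+1)*(u+3) = (d+1)*u + 3*d + 3 := by ring
      set w := (d+1)*u with hw
      omega
  · rintro (rfl | rfl)
    · exact ⟨by omega, ⟨1, by omega⟩⟩
    · exact ⟨by omega, ⟨2, by omega⟩⟩

theorem stmt_14 (p n t r : ℕ) (hp : p.Prime) (hp3 : 3 < p)
    (hr : r = 2 + n * (p - 1) * p^t) :
    (p : ℤ)^(t + 2) ∣ (∑ j ∈ (Finset.Ioc 1 (r - 1)).filter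
        (fun j => j % (p - 1) = 1 % (p - 1)), (r.choose j : ℤ))
      - (2 - (r : ℤ) + 2 * (n : ℤ) * (p : ℤ)^(t + 1)) := by
  have hp5 : 5 ≤ p := by
    have h4 : p ≠ 4 := by rintro rfl; norm_num at hp
    omega
  obtain ⟨d, rfl⟩ : ∃ d, p = d + 2 := ⟨p - 2, by omega⟩
  have hd3 : 3 ≤ d := by omega
  have hd1 : d + 2 - 1 = d + 1 := rfl
  rw [hd1] at hr ⊢
  haveI : Fact (Nat.Prime (d+2)) := ⟨hp⟩
  haveI : NeZero ((d+2)^(t+2)) := ⟨pow_ne_zero _ hp.pos.ne'⟩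
  set R := ZMod ((d+2)^(t+2)) with hR
  obtain ⟨ω, hω1, hωu, hωz⟩ := Wexists hp hp3 (t+2) (by omega)
  rw [hd1] at hω1 hωu
  -- skolemize the per-k coefficients
  have hCk : ∀ k : ℕ, ∃ c : R,
      (1+ω^k)^r = (1+ω^k)^2 + (n : R) * ((d+2 : ℕ) : R)^(t+1) * ((1+ω^k)^2*c) ∧
      ((d+2 : ℕ) : R) * ((1+ω^k)^2*c) = (1+ω^k)^((d+2)+1) - (1+ω^k)^2 := by
    intro k
    exact Ck hp hp3 (by rw [hr, hd1]) (1+ω^k) (hωz k)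
  choose c hc1 hc2 using hCk
  set B := ∑ k ∈ Finset.range (d+1), ω^(d*k) * ((1+ω^k)^2 * c k) with hB
  -- evaluated Gswap instances
  have hG2 : ∑ k ∈ Finset.range (d+1), ω^(d*k) * (1+ω^k)^2 = ((d:R)+1) * 2 := by
    rw [Gswap d ω hω1 hωu 2, Hf2 d hd3]
    norm_num
  have hGp : ∑ k ∈ Finset.range (d+1), ω^(d*k) * (1+ω^k)^((d+2)+1)
      = ((d:R)+1) * (2*((d:R)+3)) := by
    rw [Gswap d ω hω1 hωu ((d+2)+1), Hf3 d hd3]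
    rw [Finset.sum_pair (show (1:ℕ) ≠ d+2 by omega)]
    have e1 : (d+2+1).choose 1 = d+3 := by rw [Nat.choose_one_right]
    have e2 : (d+2+1).choose (d+2) = d+3 := by
      have := Nat.choose_symm (show d+2 ≤ d+2+1 by omega)
      rw [show d+2+1-(d+2) = 1 by omega] at this
      rw [← this, Nat.choose_one_right]
    rw [e1, e2]
    push_cast
    ring
  have hGr := Gswap d ω hω1 hωu r
  -- A in two ways
  have hA1 : ∑ k ∈ Finset.range (d+1), ω^(d*k) * (1+ω^k)^r
      = ((d:R)+1) * 2 + (n : R) * ((d+2 : ℕ) : R)^(t+1) * B := by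
    rw [hB, Finset.mul_sum, ← hG2, ← Finset.sum_add_distrib]
    apply Finset.sum_congr rfl
    intro k _
    rw [hc1 k]
    ring
  -- p*B evaluation
  have hpB : ((d+2 : ℕ) : R) * (B - ((d:R)+1) * 2) = 0 := by
    have h1 : ((d+2 : ℕ) : R) * B
        = ∑ k ∈ Finset.range (d+1), ω^(d*k) * ((1+ω^k)^((d+2)+1) - (1+ω^k)^2) := by
      rw [hB, Finset.mul_sum]
      apply Finset.sum_congr rfl
      intro k _
      rw [← hc2 k]
      ring
    have h2 : ∑ k ∈ Finset.range (d+1), ω^(d*k) * ((1+ω^k)^((d+2)+1) - (1+ω^k)^2)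
        = ((d:R)+1) * (2*((d:R)+3)) - ((d:R)+1) * 2 := by
      rw [← hGp, ← hG2, ← Finset.sum_sub_distrib]
      apply Finset.sum_congr rfl
      intro k _
      ring
    rw [mul_sub, h1, h2]
    push_cast
    ring
  have hkill : ((d+2 : ℕ) : R)^(t+1) * (B - ((d:R)+1) * 2) = 0 := by
    have := Kill hp (by omega : 2 ≤ t+2) _ hpB
    rwa [show t+2-1 = t+1 from rfl] at this
  -- combine
  have hT : ((d:R)+1) * (∑ j ∈ (Finset.range (r+1)).filter (fun j => (d+1) ∣ (j+d)), (r.choose j : R))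
      = ((d:R)+1) * (2 + 2*(n:R)*((d+2 : ℕ) : R)^(t+1)) := by
    rw [← hGr, hA1]
    linear_combination (n:R) * hkill
  have hdu : IsUnit ((d:R)+1) := by
    have he : ((d+1 : ℕ) : R) = (d:R)+1 := by push_cast; ring
    rw [← he]
    apply Ured hp (by omega : 1 ≤ t+2)
    rw [map_natCast, Ne, ZMod.natCast_eq_zero_iff]
    intro hdvd
    have := Nat.le_of_dvd (by omega) hdvd
    omega
  have hTval : (∑ j ∈ (Finset.range (r+1)).filter (fun j => (d+1) ∣ (j+d)), (r.choose j : R))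
      = 2 + 2*(n:R)*((d+2 : ℕ) : R)^(t+1) := by
    obtain ⟨v, hv⟩ := hdu
    have := congrArg (fun w => ((v⁻¹ : Rˣ) : R) * w) hT
    simpa [← hv, ← mul_assoc] using this
  -- index sets
  have hr2 : 2 ≤ r := by rw [hr]; omega
  have hrmod : ¬ (d+1) ∣ (r + d) := by
    have hw : r = 2 + (d+1)*(n*(d+2)^t) := by rw [hr]; ring
    intro hdv
    have h1 : (d+1) ∣ (d+1)*(n*(d+2)^t + 1) := dvd_mul_right _ _
    have h2 : (d+1) ∣ (r + d) - (d+1)*(n*(d+2)^t + 1) := Nat.dvd_sub hdv h1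
    have hexp : (d+1)*(n*(d+2)^t + 1) = (d+1)*(n*(d+2)^t) + d + 1 := by ring
    have h3 : (r + d) - (d+1)*(n*(d+2)^t + 1) = 1 := by
      set w := (d+1)*(n*(d+2)^t) with hww
      omega
    rw [h3] at h2
    have := Nat.le_of_dvd one_pos h2
    omega
  have hidx : (Finset.range (r+1)).filter (fun j => (d+1) ∣ (j+d))
      = insert 1 ((Finset.Ioc 1 (r-1)).filter (fun j => j % (d+1) = 1 % (d+1))) := by
    ext j
    simp only [Finset.mem_filter, Finset.mem_range, Finset.mem_insert, Finset.mem_Ioc]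
    constructor
    · rintro ⟨hj, hdvd⟩
      by_cases h1 : j = 1
      · left; exact h1
      · right
        have hj0 : j ≠ 0 := by
          rintro rfl
          have := Nat.le_of_dvd (by omega) hdvd
          omega
        have hjr : j ≠ r := by
          rintro rfl
          exact hrmod hdvd
        exact ⟨⟨by omega, by omega⟩, (Hmod d j hd3).mp hdvd⟩
    · rintro (rfl | ⟨⟨hj1, hj2⟩, hmod⟩)
      · exact ⟨by omega, ⟨1, by omega⟩⟩
      · exact ⟨by omega, (Hmod d j hd3).mpr hmod⟩
  have hnm : (1:ℕ) ∉ (Finset.Ioc 1 (r-1)).filter (fun j => j % (d+1) = 1 % (d+1)) := by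
    simp
  rw [hidx, Finset.sum_insert hnm, Nat.choose_one_right] at hTval
  -- final cast
  have hfin : ((((∑ j ∈ (Finset.Ioc 1 (r-1)).filter (fun j => j % (d+1) = 1 % (d+1)), (r.choose j : ℤ))
      - (2 - (r : ℤ) + 2 * (n : ℤ) * ((d+2 : ℕ) : ℤ)^(t + 1))) : ℤ) : R) = 0 := by
    rw [Int.cast_sub, Int.cast_sum, Int.cast_add, Int.cast_sub, Int.cast_mul, Int.cast_mul, Int.cast_pow]
    push_cast at hTval ⊢
    linear_combination hTval
  have hfin2 := (ZMod.intCast_zmod_eq_zero_iff_dvd _ ((d+2)^(t+2))).mp hfin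
  push_cast at hfin2 ⊢
  exact hfin2
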